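/- Suppose (z, w) satisfies (C1)–(C3). Then there exists a finite collection of strategy forests {(time(i,j,·), prob(i,j,·))}_j, with at most B·|S_i| forests for each arm i, such that for every state u ∈ S_i and every t ∈ {1,…,B}, z_{u,t} = ∑_{j : time(i,j,u) = t} prob(i,j,u). Consequently, ∑_{(i,j,u) : time(i,j,u) = t} prob(i,j,u) ≤ 1 for every t ∈ {1,…,B}. -/

import Mathlib

open Finset

/-- A strategy forest for arm `i`: an assignment of times (in `{1,…,B} ∪ {∞}`)
and play probabilities to the states of arm `i` such that times strictly
increase along tree edges and probabilities follow the transition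
probabilities. -/
def IsStrategyForest {S : Type*} {n : ℕ} (B : ℕ) (arm : S → Fin n) (ρ : Fin n → S)
    (parent : S → S) (p : S → ℝ) (i : Fin n)
    (time : S → WithTop ℕ) (prob : S → ℝ) : Prop :=
  (∀ u, arm u = i → 0 ≤ prob u) ∧
  (∀ u, arm u = i → time u ≠ ⊤ → 1 ≤ time u ∧ time u ≤ (B : WithTop ℕ)) ∧
  (∀ u, arm u = i → u ≠ ρ i →
    (time (parent u) = ⊤ → time u = ⊤) ∧
    (time u ≠ ⊤ → time (parent u) + 1 ≤ time u) ∧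
    (time u ≠ ⊤ → prob u = p u * prob (parent u)) ∧
    (time u = ⊤ → prob u = 0))

/-- Product of transition probabilities along the path from the root, computed
with fuel `k` (intended to be the depth of the state). -/
noncomputable def auxPi {S : Type*} [DecidableEq S] {n : ℕ} (arm : S → Fin n) (ρ : Fin n → S)
    (parent : S → S) (p : S → ℝ) : ℕ → S → ℝ
  | 0, _ => 1
  | k+1, u => if u = ρ (arm u) then 1 else p u * auxPi arm ρ parent p k (parent u)

lemma auxPi_nonneg {S : Type*} [DecidableEq S] {n : ℕ} (arm : S → Fin n) (ρ : Fin n → S)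
    (parent : S → S) (p : S → ℝ) (hp : ∀ u, 0 ≤ p u) :
    ∀ k u, 0 ≤ auxPi arm ρ parent p k u := by
  intro k
  induction k with
  | zero => intro u; simp [auxPi]
  | succ k ih =>
      intro u
      simp only [auxPi]
      split
      · exact zero_le_one
      · exact mul_nonneg (hp u) (ih _)

/-- (Convex decomposition, tree case.) Any solution `(z, w)`
of constraints (C1)–(C3) decomposes into at most `B·|S_i|` strategy forests per
arm whose marginals reproduce `z`; consequently the total peeled probability at
each time is at most 1. -/
theorem stmt_5 {S : Type*} [Fintype S] [DecidableEq S] {n : ℕ}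
    (B : ℕ)
    (arm : S → Fin n) (ρ : Fin n → S) (parent : S → S) (depth : S → ℕ) (p : S → ℝ)
    (hρ : ∀ i, arm (ρ i) = i)
    (hparent_arm : ∀ u, arm (parent u) = arm u)
    (hparent_root : ∀ i, parent (ρ i) = ρ i)
    (hdepth_root : ∀ i, depth (ρ i) = 0)
    (hdepth : ∀ u, u ≠ ρ (arm u) → depth u = depth (parent u) + 1)
    (hp : ∀ u, 0 ≤ p u ∧ p u ≤ 1)
    (hpsum : ∀ v : S, ∑ u ∈ univ.filter (fun u => u ≠ ρ (arm u) ∧ parent u = v), p u ≤ 1)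
    (z w : S → ℕ → ℝ)
    (hznn : ∀ u t, 0 ≤ z u t) (hwnn : ∀ u t, 0 ≤ w u t)
    (hC1 : ∀ u : S, u ≠ ρ (arm u) →
      w u 1 = 0 ∧ ∀ t ∈ Icc 2 B, w u t = z (parent u) (t - 1) * p u)
    (hC2 : ∀ u : S, ∀ t ∈ Icc 1 B, ∑ t' ∈ Icc 1 t, z u t' ≤ ∑ t' ∈ Icc 1 t, w u t')
    (hC3 : ∀ t ∈ Icc 1 B, ∑ u : S, z u t ≤ 1) :
    ∃ (J : Fin n → ℕ) (time : Fin n → ℕ → S → WithTop ℕ) (prob : Fin n → ℕ → S → ℝ),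
      (∀ i, J i ≤ B * (univ.filter (fun u => arm u = i)).card) ∧
      (∀ i, ∀ j < J i, IsStrategyForest B arm ρ parent p i (time i j) (prob i j)) ∧
      (∀ u : S, ∀ t ∈ Icc 1 B,
        z u t = ∑ j ∈ (range (J (arm u))).filter
          (fun j => time (arm u) j u = (t : WithTop ℕ)), prob (arm u) j u) ∧
      (∀ t ∈ Icc 1 B,
        ∑ u : S, ∑ j ∈ (range (J (arm u))).filter
          (fun j => time (arm u) j u = (t : WithTop ℕ)), prob (arm u) j u ≤ 1) := by
  classical
  obtain ⟨Pi, hPi⟩ : ∃ f : S → ℝ, ∀ u, f u = auxPi arm ρ parent p (depth u) u :=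
    ⟨_, fun _ => rfl⟩
  obtain ⟨Zc, hZc⟩ : ∃ f : S → ℕ → ℝ, ∀ u t, f u t = ∑ t' ∈ Icc 1 t, z u t' :=
    ⟨_, fun _ _ => rfl⟩
  obtain ⟨F, hF⟩ : ∃ f : Fin n → Finset ℝ, ∀ i, f i =
      (((univ.filter fun u => arm u = i ∧ 0 < Pi u) ×ˢ Icc 1 B).image
        (fun q => Zc q.1 q.2 / Pi q.1)).filter (fun x => 0 < x) := ⟨_, fun _ => rfl⟩
  obtain ⟨b, hb⟩ : ∃ f : Fin n → ℕ → ℝ, ∀ i j, f i j =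
      if h2 : j - 1 < (F i).card ∧ j ≠ 0 then
        (((F i).orderIsoOfFin rfl) ⟨j-1, h2.1⟩ : ℝ) else 0 := ⟨_, fun _ _ => rfl⟩
  obtain ⟨timeF, htimeF⟩ : ∃ f : Fin n → ℕ → S → WithTop ℕ, ∀ i j u, f i j u =
      if 0 < Pi u then
        ((Icc 1 B).filter (fun t => b i (j+1) * Pi u ≤ Zc u t)).min
      else ⊤ := ⟨_, fun _ _ _ => rfl⟩
  obtain ⟨probF, hprobF⟩ : ∃ f : Fin n → ℕ → S → ℝ, ∀ i j u, f i j u =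
      if timeF i j u = ⊤ then 0 else Pi u * (b i (j+1) - b i j) := ⟨_, fun _ _ _ => rfl⟩
  -- basic facts about Pi
  have hPinn : ∀ u, 0 ≤ Pi u := by
    intro u; rw [hPi]; exact auxPi_nonneg arm ρ parent p (fun v => (hp v).1) _ u
  have hroot_of_depth : ∀ u, depth u = 0 → u = ρ (arm u) := by
    intro u h; by_contra hne; have := hdepth u hne; omega
  have hPi_root : ∀ u, u = ρ (arm u) → Pi u = 1 := by
    intro u h
    have hd : depth u = 0 := by rw [h, hdepth_root]
    rw [hPi, hd]; rfl
  have hPi_step : ∀ u, u ≠ ρ (arm u) → Pi u = p u * Pi (parent u) := by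
    intro u h
    rw [hPi, hPi, hdepth u h]
    simp [auxPi, h]
  -- basic facts about Zc
  have hZc0 : ∀ u, Zc u 0 = 0 := by intro u; rw [hZc]; simp
  have hZcnn : ∀ u t, 0 ≤ Zc u t := by
    intro u t; rw [hZc]; exact Finset.sum_nonneg fun _ _ => hznn _ _
  have hZcmono : ∀ u s t, s ≤ t → Zc u s ≤ Zc u t := by
    intro u s t h; rw [hZc, hZc]
    exact Finset.sum_le_sum_of_subset_of_nonneg (Icc_subset_Icc_right h)
      (fun _ _ _ => hznn _ _)
  have hZcsucc : ∀ u t, Zc u (t+1) = Zc u t + z u (t+1) := by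
    intro u t; rw [hZc, hZc]; exact Finset.sum_Icc_succ_top (by omega) _
  have hzEq : ∀ u t, 1 ≤ t → z u t = Zc u t - Zc u (t-1) := by
    intro u t ht
    obtain ⟨s, rfl⟩ : ∃ s, t = s + 1 := ⟨t-1, by omega⟩
    simp only [Nat.add_sub_cancel]
    rw [hZcsucc u s]; ring
  -- C2 in cumulative form
  have hC2' : ∀ u, u ≠ ρ (arm u) → ∀ t ∈ Icc 1 B, Zc u t ≤ p u * Zc (parent u) (t-1) := by
    intro u hu t ht
    obtain ⟨ht1, htB⟩ := mem_Icc.mp ht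
    have h2 := hC2 u t ht
    have hw : ∑ t' ∈ Icc 1 t, w u t' = p u * Zc (parent u) (t-1) := by
      have hsplit : Icc 1 t = insert 1 (Icc 2 t) := by
        ext x; simp only [mem_Icc, mem_insert]; omega
      rw [hsplit, Finset.sum_insert (by simp), (hC1 u hu).1, zero_add, hZc, mul_sum]
      refine Finset.sum_nbij' (fun t' => t' - 1) (fun s => s + 1) ?_ ?_ ?_ ?_ ?_
      · intro a ha; simp only [mem_Icc] at ha ⊢; omega
      · intro a ha; simp only [mem_Icc] at ha ⊢; omega
      · intro a ha; simp only [mem_Icc] at ha; omega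
      · intro a ha; simp only [mem_Icc] at ha; omega
      · intro a ha
        rw [mem_Icc] at ha
        rw [(hC1 u hu).2 a (mem_Icc.mpr ⟨ha.1, le_trans ha.2 htB⟩)]
        ring
    rw [hw] at h2
    rw [hZc]
    exact h2
  -- states with zero path probability carry no z-mass
  have hPi0Zc : ∀ u, Pi u = 0 → ∀ t, t ≤ B → Zc u t = 0 := by
    have key : ∀ d, ∀ u, depth u ≤ d → Pi u = 0 → ∀ t, t ≤ B → Zc u t = 0 := by
      intro d
      induction d with
      | zero =>
          intro u hdep hPiu t htB
          have hr : u = ρ (arm u) := hroot_of_depth u (by omega)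
          rw [hPi_root u hr] at hPiu; norm_num at hPiu
      | succ d ih =>
          intro u hdep hPiu t htB
          by_cases hu : u = ρ (arm u)
          · rw [hPi_root u hu] at hPiu; norm_num at hPiu
          · have hstep := hPi_step u hu
            rcases Nat.eq_zero_or_pos t with ht0 | ht1
            · rw [ht0]; exact hZc0 u
            · rcases (hp u).1.lt_or_eq with hppos | hp0
              · -- 0 < p u, hence Pi (parent u) = 0
                have hpp : Pi (parent u) = 0 := by
                  rw [hPiu] at hstep
                  rcases mul_eq_zero.mp hstep.symm with h | h
                  · exact absurd h (ne_of_gt hppos)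
                  · exact h
                have hdp : depth (parent u) ≤ d := by have := hdepth u hu; omega
                have hZp := ih (parent u) hdp hpp (t-1) (by omega)
                have hle := hC2' u hu t (mem_Icc.mpr ⟨ht1, htB⟩)
                rw [hZp, mul_zero] at hle
                linarith [hZcnn u t]
              · -- p u = 0
                have hle := hC2' u hu t (mem_Icc.mpr ⟨ht1, htB⟩)
                rw [← hp0, zero_mul] at hle
                linarith [hZcnn u t]
    intro u; exact key (depth u) u le_rfl
  -- breakpoint facts
  have hFpos : ∀ i x, x ∈ F i → 0 < x := by
    intro i x hx; rw [hF] at hx; exact (mem_filter.mp hx).2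
  have hbzero : ∀ i, b i 0 = 0 := by
    intro i; rw [hb]; rw [dif_neg (by simp)]
  have hbmem : ∀ i j, 1 ≤ j → j ≤ (F i).card → b i j ∈ F i := by
    intro i j h1 h2; rw [hb, dif_pos ⟨by omega, by omega⟩]
    exact (((F i).orderIsoOfFin rfl) ⟨j-1, by omega⟩).2
  have hbpos : ∀ i j, 1 ≤ j → j ≤ (F i).card → 0 < b i j :=
    fun i j h1 h2 => hFpos i _ (hbmem i j h1 h2)
  have hbstrict : ∀ i j j', j < j' → j' ≤ (F i).card → b i j < b i j' := by
    intro i j j' hjj hj'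
    rcases Nat.eq_zero_or_pos j with rfl | hj1
    · rw [hbzero]; exact hbpos i j' (by omega) hj'
    · rw [hb, hb, dif_pos (⟨by omega, by omega⟩ : j - 1 < (F i).card ∧ j ≠ 0),
        dif_pos (⟨by omega, by omega⟩ : j' - 1 < (F i).card ∧ j' ≠ 0)]
      refine Subtype.coe_lt_coe.mpr ?_
      exact ((F i).orderIsoOfFin rfl).strictMono (by simp [Fin.lt_def]; omega)
  have hbsurj : ∀ i x, x ∈ F i → ∃ j, 1 ≤ j ∧ j ≤ (F i).card ∧ b i j = x := by
    intro i x hx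
    obtain ⟨k, hk⟩ : ∃ k, ((F i).orderIsoOfFin rfl) k = ⟨x, hx⟩ :=
      ⟨((F i).orderIsoOfFin rfl).symm ⟨x, hx⟩, OrderIso.apply_symm_apply _ _⟩
    have hkl := k.isLt
    refine ⟨(k : ℕ) + 1, by omega, by omega, ?_⟩
    rw [hb, dif_pos ⟨by omega, by omega⟩]
    have heq : (⟨(k:ℕ)+1-1, by omega⟩ : Fin (F i).card) = k := by
      apply Fin.ext; simp
    rw [heq, hk]
  -- characterization of finite times
  have htime_fin : ∀ i j u, timeF i j u ≠ ⊤ → 0 < Pi u ∧ ∃ t, t ∈ Icc 1 B ∧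
      timeF i j u = (t : WithTop ℕ) ∧ b i (j+1) * Pi u ≤ Zc u t := by
    intro i j u hne
    rw [htimeF] at hne ⊢
    by_cases hPiu : 0 < Pi u
    · rw [if_pos hPiu] at hne ⊢
      obtain ⟨t, htv⟩ := WithTop.ne_top_iff_exists.mp hne
      have hmem := Finset.mem_of_min htv.symm
      rw [mem_filter] at hmem
      exact ⟨hPiu, t, hmem.1, htv.symm, hmem.2⟩
    · rw [if_neg hPiu] at hne; exact absurd rfl hne
  have htime_iff : ∀ i j u, 0 < Pi u → 0 < b i (j+1) → ∀ t, t ∈ Icc 1 B →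
      (timeF i j u = (t : WithTop ℕ) ↔
        (b i (j+1) * Pi u ≤ Zc u t ∧ Zc u (t-1) < b i (j+1) * Pi u)) := by
    intro i j u hPiu hbj t ht
    obtain ⟨ht1, htB⟩ := mem_Icc.mp ht
    rw [htimeF, if_pos hPiu]
    constructor
    · intro hmin
      have hmem := Finset.mem_of_min hmin
      rw [mem_filter] at hmem
      refine ⟨hmem.2, ?_⟩
      by_contra hcon; push_neg at hcon
      rcases Nat.eq_zero_or_pos (t-1) with h0 | h1
      · rw [h0, hZc0] at hcon; nlinarith
      · have htm : t - 1 ∈ (Icc 1 B).filter (fun t' => b i (j+1) * Pi u ≤ Zc u t') :=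
          mem_filter.mpr ⟨mem_Icc.mpr ⟨h1, by omega⟩, hcon⟩
        have hle := Finset.min_le htm
        rw [hmin] at hle
        have : t ≤ t - 1 := WithTop.coe_le_coe.mp hle
        omega
    · rintro ⟨hge, hlt⟩
      apply le_antisymm
      · exact Finset.min_le (mem_filter.mpr ⟨ht, hge⟩)
      · apply Finset.le_min
        intro t' ht'
        rw [mem_filter] at ht'
        have : t ≤ t' := by
          by_contra hc; push_neg at hc
          have := hZcmono u t' (t-1) (by omega)
          linarith [ht'.2]
        exact WithTop.coe_le_coe.mpr this
  -- the marginal identity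
  have hmarg : ∀ u : S, ∀ t ∈ Icc 1 B,
      z u t = ∑ j ∈ (range ((F (arm u)).card)).filter
        (fun j => timeF (arm u) j u = (t : WithTop ℕ)), probF (arm u) j u := by
    intro u t ht
    obtain ⟨ht1, htB⟩ := mem_Icc.mp ht
    rcases (hPinn u).lt_or_eq with hPiu | hPiu0
    · -- 0 < Pi u
      have hac : Zc u (t-1) ≤ Zc u t := hZcmono u _ _ (by omega)
      have hgetIdx : ∀ s, s ≤ B → ∃ jj, jj ≤ (F (arm u)).card ∧
          b (arm u) jj = Zc u s / Pi u := by
        intro s hsB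
        rcases (div_nonneg (hZcnn u s) hPiu.le).lt_or_eq with hpos | h0
        · have hs1 : 1 ≤ s := by
            by_contra hc
            have hs0 : s = 0 := by omega
            rw [hs0, hZc0, zero_div] at hpos; exact lt_irrefl _ hpos
          have hmem : Zc u s / Pi u ∈ F (arm u) := by
            rw [hF, mem_filter]
            refine ⟨mem_image.mpr ⟨(u, s), ?_, rfl⟩, hpos⟩
            rw [mem_product]
            exact ⟨mem_filter.mpr ⟨mem_univ u, rfl, hPiu⟩, mem_Icc.mpr ⟨hs1, hsB⟩⟩
          obtain ⟨jj, _, h2, h3⟩ := hbsurj _ _ hmem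
          exact ⟨jj, h2, h3⟩
        · exact ⟨0, by omega, by rw [hbzero]; exact h0⟩
      obtain ⟨ja, hjac, hjav⟩ := hgetIdx (t-1) (by omega)
      obtain ⟨jc, hjcc, hjcv⟩ := hgetIdx t htB
      have hjalejc : ja ≤ jc := by
        by_contra hc; push_neg at hc
        have hlt := hbstrict (arm u) jc ja hc hjac
        rw [hjav, hjcv] at hlt
        have hle2 : Zc u (t-1) / Pi u ≤ Zc u t / Pi u :=
          div_le_div_of_nonneg_right hac (hPinn u)
        linarith
      -- the filtered index set is an interval
      have hfeq : (range ((F (arm u)).card)).filter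
          (fun j => timeF (arm u) j u = (t : WithTop ℕ)) = Ico ja jc := by
        ext j
        rw [mem_filter, mem_range, mem_Ico]
        constructor
        · rintro ⟨hjm, hjt⟩
          have hbj1 : 0 < b (arm u) (j+1) := hbpos _ _ (by omega) (by omega)
          rw [htime_iff _ _ _ hPiu hbj1 t ht] at hjt
          obtain ⟨hge, hlt⟩ := hjt
          constructor
          · by_contra hc; push_neg at hc
            have hble : b (arm u) (j+1) ≤ b (arm u) ja := by
              rcases eq_or_lt_of_le (show j + 1 ≤ ja by omega) with h | h
              · rw [h]
              · exact (hbstrict (arm u) (j+1) ja h hjac).le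
            rw [hjav] at hble
            have : b (arm u) (j+1) * Pi u ≤ Zc u (t-1) := by
              calc b (arm u) (j+1) * Pi u ≤ (Zc u (t-1) / Pi u) * Pi u := by nlinarith
                _ = Zc u (t-1) := div_mul_cancel₀ _ (ne_of_gt hPiu)
            linarith
          · by_contra hc; push_neg at hc
            have hlt2 := hbstrict (arm u) jc (j+1) (by omega) (by omega)
            rw [hjcv] at hlt2
            have : b (arm u) (j+1) ≤ Zc u t / Pi u := (le_div_iff₀ hPiu).mpr hge
            linarith
        · rintro ⟨hja1, hjjc⟩
          have hjm : j < (F (arm u)).card := by omega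
          have hbj1 : 0 < b (arm u) (j+1) := hbpos _ _ (by omega) (by omega)
          refine ⟨hjm, ?_⟩
          rw [htime_iff _ _ _ hPiu hbj1 t ht]
          constructor
          · have hble : b (arm u) (j+1) ≤ b (arm u) jc := by
              rcases eq_or_lt_of_le (show j + 1 ≤ jc by omega) with h | h
              · rw [h]
              · exact (hbstrict (arm u) (j+1) jc h hjcc).le
            rw [hjcv] at hble
            calc b (arm u) (j+1) * Pi u ≤ (Zc u t / Pi u) * Pi u := by nlinarith
              _ = Zc u t := div_mul_cancel₀ _ (ne_of_gt hPiu)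
          · have hblt : b (arm u) ja < b (arm u) (j+1) :=
              hbstrict (arm u) ja (j+1) (by omega) (by omega)
            rw [hjav] at hblt
            calc Zc u (t-1) = (Zc u (t-1) / Pi u) * Pi u :=
                  (div_mul_cancel₀ _ (ne_of_gt hPiu)).symm
              _ < b (arm u) (j+1) * Pi u := by nlinarith
      rw [hfeq]
      have hsum : ∑ j ∈ Ico ja jc, probF (arm u) j u =
          ∑ j ∈ Ico ja jc, Pi u * (b (arm u) (j+1) - b (arm u) j) := by
        apply Finset.sum_congr rfl
        intro j hjmem
        have hjmem' : j ∈ (range ((F (arm u)).card)).filter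
            (fun j => timeF (arm u) j u = (t : WithTop ℕ)) := by rw [hfeq]; exact hjmem
        obtain ⟨_, hjt⟩ := mem_filter.mp hjmem'
        rw [hprobF, if_neg (by rw [hjt]; simp)]
      rw [hsum, ← Finset.mul_sum]
      have htel : ∑ j ∈ Ico ja jc, (b (arm u) (j+1) - b (arm u) j) =
          b (arm u) jc - b (arm u) ja := by
        rw [Finset.sum_Ico_eq_sub _ hjalejc, Finset.sum_range_sub, Finset.sum_range_sub]
        ring
      rw [htel, hjav, hjcv, hzEq u t ht1]
      field_simp
    · -- Pi u = 0
      have hzt : z u t = 0 := by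
        have h1 := hPi0Zc u hPiu0.symm t htB
        have h2 := hPi0Zc u hPiu0.symm (t-1) (by omega)
        rw [hzEq u t ht1, h1, h2]; ring
      rw [hzt]
      symm; apply Finset.sum_eq_zero
      intro j hj
      obtain ⟨_, hjt⟩ := mem_filter.mp hj
      rw [htimeF, if_neg (by rw [← hPiu0]; exact lt_irrefl 0)] at hjt
      exact absurd hjt (by simp)
  -- assemble the answer
  refine ⟨fun i => (F i).card, timeF, probF, ?_, ?_, hmarg, ?_⟩
  · -- cardinality bound
    intro i
    show (F i).card ≤ B * (univ.filter (fun u => arm u = i)).card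
    rw [hF]
    refine le_trans (card_le_card (filter_subset _ _)) ?_
    refine le_trans card_image_le ?_
    rw [card_product, Nat.card_Icc]
    simp only [Nat.add_sub_cancel]
    rw [mul_comm]
    exact mul_le_mul_right (card_le_card (fun u hu =>
      mem_filter.mpr ⟨mem_univ u, (mem_filter.mp hu).2.1⟩)) B
  · -- strategy forest properties
    intro i j hj0
    have hj : j < (F i).card := hj0
    refine ⟨?_, ?_, ?_⟩
    · intro u _
      rw [hprobF]
      split
      · exact le_refl 0
      · refine mul_nonneg (hPinn u) ?_
        have := hbstrict i j (j+1) (by omega) (by omega)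
        linarith
    · intro u _ hne
      obtain ⟨hPiu, t, htmem, htv, _⟩ := htime_fin i j u hne
      obtain ⟨h1, h2⟩ := mem_Icc.mp htmem
      rw [htv]
      exact ⟨WithTop.coe_le_coe.mpr h1, WithTop.coe_le_coe.mpr h2⟩
    · intro u harm hne
      have hu' : u ≠ ρ (arm u) := by rw [harm]; exact hne
      have hpar : timeF i j u ≠ ⊤ → ∃ t, t ∈ Icc 1 B ∧ 2 ≤ t ∧
          timeF i j u = (t : WithTop ℕ) ∧
          timeF i j (parent u) ≤ ((t-1 : ℕ) : WithTop ℕ) ∧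
          timeF i j (parent u) ≠ ⊤ := by
        intro hne2
        obtain ⟨hPiu, t, htmem, htv, hget⟩ := htime_fin i j u hne2
        obtain ⟨h1, hB2⟩ := mem_Icc.mp htmem
        have hppos : 0 < p u := by
          rcases (hp u).1.lt_or_eq with h | h
          · exact h
          · exfalso; rw [hPi_step u hu', ← h, zero_mul] at hPiu; exact lt_irrefl 0 hPiu
        have hPip : 0 < Pi (parent u) := by
          have hst := hPi_step u hu'
          nlinarith [hPinn (parent u)]
        have hbj1 : 0 < b i (j+1) := hbpos i (j+1) (by omega) (by omega)
        have hC2u := hC2' u hu' t htmem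
        have ht2 : 2 ≤ t := by
          by_contra hc; push_neg at hc
          have ht1' : t = 1 := by omega
          rw [ht1'] at hC2u hget
          rw [show (1:ℕ)-1 = 0 from rfl, hZc0, mul_zero] at hC2u
          nlinarith
        have hpb : b i (j+1) * Pi (parent u) ≤ Zc (parent u) (t-1) := by
          have h3 : b i (j+1) * Pi u ≤ p u * Zc (parent u) (t-1) := le_trans hget hC2u
          rw [hPi_step u hu'] at h3
          nlinarith
        have hparfin : timeF i j (parent u) ≤ ((t-1 : ℕ) : WithTop ℕ) := by
          rw [htimeF, if_pos hPip]
          have hmem' : t - 1 ∈ (Icc 1 B).filter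
              (fun s => b i (j+1) * Pi (parent u) ≤ Zc (parent u) s) := by
            rw [mem_filter, mem_Icc]
            exact ⟨⟨by omega, by omega⟩, hpb⟩
          exact Finset.min_le hmem'
        exact ⟨t, htmem, ht2, htv, hparfin,
          ne_top_of_le_ne_top (WithTop.coe_ne_top) hparfin⟩
      refine ⟨?_, ?_, ?_, ?_⟩
      · intro hpt
        by_contra hne2
        obtain ⟨t, _, _, _, _, hfin⟩ := hpar hne2
        exact hfin hpt
      · intro hne2
        obtain ⟨t, htmem, ht2, htv, hle, _⟩ := hpar hne2
        rw [htv]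
        calc timeF i j (parent u) + 1 ≤ ((t-1:ℕ) : WithTop ℕ) + 1 := add_le_add_left hle 1
          _ = (t : WithTop ℕ) := by rw [← Nat.cast_add_one]; congr 1; omega
      · intro hne2
        obtain ⟨t, _, _, _, _, hparfin⟩ := hpar hne2
        rw [hprobF, hprobF, if_neg hne2, if_neg hparfin, hPi_step u hu']
        ring
      · intro htop; rw [hprobF, if_pos htop]
  · -- total probability bound
    intro t ht
    calc ∑ u : S, ∑ j ∈ (range ((F (arm u)).card)).filter
          (fun j => timeF (arm u) j u = (t : WithTop ℕ)), probF (arm u) j u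
        = ∑ u : S, z u t :=
          Finset.sum_congr rfl (fun u _ => (hmarg u t ht).symm)
      _ ≤ 1 := hC3 t ht
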